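/- Let L : C → C be a localization functor with adjunction morphism η : Id → L (so Lη is invertible and Lη = ηL), and suppose L admits a right adjoint Γ. Then Γ is a colocalization functor, i.e., the coadjunction θ : Γ → Id satisfies that Γθ is invertible and Γθ = θΓ. -/
import Mathlib


open CategoryTheory

/-- **Lemma (loc-adjoint, part 1).** Let `L : C ⥤ C` be a localization functor with
adjunction `η : 𝟭 C ⟶ L` (so `L(ηX)` is invertible and `L(ηX) = η(LX)` for all `X`),
and suppose `L` admits a right adjoint `Γ`.  Then `Γ` is a colocalization functor:
the coadjunction `θ : Γ ⟶ 𝟭 C`, given at `Y` by `η_{ΓY} ≫ ε_Y` (the image of the identity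
under `Hom(ΓY, ΓY) ≅ Hom(LΓY, Y)` followed by precomposition with `η`), satisfies that
`Γ(θY)` is invertible and `Γ(θY) = θ(ΓY)` for all `Y`. -/
theorem stmt4 {C : Type*} [Category C] (L Γ : C ⥤ C) (η : 𝟭 C ⟶ L)
    (hloc : ∀ X : C, IsIso (L.map (η.app X)) ∧ L.map (η.app X) = η.app (L.obj X))
    (adj : L ⊣ Γ) :
    ∀ Y : C,
      IsIso (Γ.map (η.app (Γ.obj Y) ≫ adj.counit.app Y)) ∧
      Γ.map (η.app (Γ.obj Y) ≫ adj.counit.app Y) =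
        η.app (Γ.obj (Γ.obj Y)) ≫ adj.counit.app (Γ.obj Y) := by
  intro Y
  have hiso : ∀ X : C, IsIso (η.app (L.obj X)) := fun X => (hloc X).2 ▸ (hloc X).1
  constructor
  · -- iso part, via Yoneda
    apply isIso_of_yoneda_map_bijective
    intro X
    -- the map `g ↦ g ≫ Γθ` is the composite of adjunction equivalences with
    -- precomposition by the iso `η_{LX}`.
    have epre : Function.Bijective
        (fun h : L.obj (L.obj X) ⟶ Y => η.app (L.obj X) ≫ h) := by
      haveI := hiso X
      refine Function.bijective_iff_has_inverse.mpr
        ⟨fun h => inv (η.app (L.obj X)) ≫ h, ?_, ?_⟩ <;> intro h <;> simp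
    have key : ∀ g : X ⟶ Γ.obj (Γ.obj Y),
        g ≫ Γ.map (η.app (Γ.obj Y) ≫ adj.counit.app Y) =
          (adj.homEquiv X Y) (η.app (L.obj X) ≫
            (adj.homEquiv (L.obj X) Y).symm ((adj.homEquiv X (Γ.obj Y)).symm g)) := by
      intro g
      have hnat : η.app (L.obj X) ≫
          (adj.homEquiv (L.obj X) Y).symm ((adj.homEquiv X (Γ.obj Y)).symm g) =
          ((adj.homEquiv X (Γ.obj Y)).symm g) ≫ η.app (Γ.obj Y) ≫ adj.counit.app Y := by
        rw [Adjunction.homEquiv_counit]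
        have := η.naturality ((adj.homEquiv X (Γ.obj Y)).symm g)
        simp only [Functor.id_obj, Functor.id_map] at this
        rw [← Category.assoc, ← this, Category.assoc]
      rw [hnat, Adjunction.homEquiv_naturality_right,
        Equiv.apply_symm_apply]
    have : (fun g : X ⟶ Γ.obj (Γ.obj Y) =>
        g ≫ Γ.map (η.app (Γ.obj Y) ≫ adj.counit.app Y)) =
        (adj.homEquiv X Y) ∘ (fun h => η.app (L.obj X) ≫ h) ∘
          (adj.homEquiv (L.obj X) Y).symm ∘ (adj.homEquiv X (Γ.obj Y)).symm :=
      funext key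
    have bij := (adj.homEquiv X Y).bijective.comp (epre.comp
      ((adj.homEquiv (L.obj X) Y).symm.bijective.comp
        (adj.homEquiv X (Γ.obj Y)).symm.bijective))
    rwa [← this] at bij
  · -- equality part, by injectivity of the adjunction transpose
    refine (adj.homEquiv (Γ.obj (Γ.obj Y)) Y).symm.injective ?_
    rw [Adjunction.homEquiv_counit, Adjunction.homEquiv_counit]
    have h1 := adj.counit.naturality (η.app (Γ.obj Y) ≫ adj.counit.app Y)
    simp only [Functor.comp_map, Functor.id_map, Functor.id_obj] at h1
    rw [h1]
    have h2 := η.naturality (adj.counit.app (Γ.obj Y))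
    simp only [Functor.id_obj, Functor.id_map, Functor.comp_obj] at h2
    rw [← Category.assoc, h2, ← (hloc (Γ.obj (Γ.obj Y))).2]
    simp
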